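/- Let H be differentiable, L-smooth, and let W, P be symmetric positive semidefinite matrices with PW = WP = W, P² = P, λ_min⁺·P ⪯ W (in the sense ⟨v,Wv⟩ ≥ λ_min⁺⟨v,Pv⟩ for v with Pv in the relevant range) and W ⪯ λ_max·I. Then for θ = 1/(L·λ_max) and any z with ∇H(z) satisfying P∇H(z)-compatibility, H(z - θ W ∇H(z)) ≤ H(z) - (θ·λ_min⁺/2)·‖∇H(z)‖²_P, where ‖u‖²_P = ⟨u, P u⟩. -/

import Mathlib

open scoped RealInnerProductSpace

theorem stmt_1 {m : ℕ} (H : EuclideanSpace ℝ (Fin m) → ℝ)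
    (gradH : EuclideanSpace ℝ (Fin m) → EuclideanSpace ℝ (Fin m))
    (L lammin lammax : ℝ) (hL : 0 < L) (hlmin : 0 < lammin) (hlmax : 0 < lammax)
    (hdiff : ∀ x, HasGradientAt H (gradH x) x)
    (hsmooth : ∀ x y, H y ≤ H x + ⟪gradH x, y - x⟫ + L / 2 * ‖y - x‖ ^ 2)
    (W P : EuclideanSpace ℝ (Fin m) →ₗ[ℝ] EuclideanSpace ℝ (Fin m))
    (hWsym : ∀ u v, ⟪W u, v⟫ = ⟪u, W v⟫) (hWpsd : ∀ v, 0 ≤ ⟪v, W v⟫)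
    (hPsym : ∀ u v, ⟪P u, v⟫ = ⟪u, P v⟫) (hPpsd : ∀ v, 0 ≤ ⟪v, P v⟫)
    (hPproj : P ∘ₗ P = P) (hPW : P ∘ₗ W = W) (hWP : W ∘ₗ P = W)
    (hmin : ∀ v, lammin * ⟪v, P v⟫ ≤ ⟪v, W v⟫)
    (hmax : ∀ v, ⟪v, W v⟫ ≤ lammax * ‖v‖ ^ 2)
    (z : EuclideanSpace ℝ (Fin m))
    (hzP : P (gradH z) = gradH z) :
    H (z - (1 / (L * lammax)) • W (gradH z)) ≤
      H z - (1 / (L * lammax)) * lammin / 2 * ⟪gradH z, P (gradH z)⟫ := by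
  set g := gradH z with hg
  set θ : ℝ := 1 / (L * lammax) with hθ
  have hθpos : 0 < θ := by positivity
  -- Cauchy-Schwarz for the PSD form associated to W
  have hCS : ⟪g, W (W g)⟫ ^ 2 ≤ ⟪g, W g⟫ * ⟪W g, W (W g)⟫ := by
    have key : ∀ t : ℝ, 0 ≤ ⟪W g, W (W g)⟫ * (t * t) + (2 * ⟪g, W (W g)⟫) * t + ⟪g, W g⟫ := by
      intro t
      have h0 := hWpsd (g + t • W g)
      have hexp : ⟪g + t • W g, W (g + t • W g)⟫ =
          ⟪W g, W (W g)⟫ * (t * t) + (2 * ⟪g, W (W g)⟫) * t + ⟪g, W g⟫ := by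
        have hsymm : ⟪W g, W g⟫ = ⟪g, W (W g)⟫ := hWsym g (W g)
        simp only [map_add, map_smul, inner_add_add_self, real_inner_smul_left,
          real_inner_smul_right, inner_add_left, inner_add_right]
        linear_combination t * hsymm
      linarith [hexp ▸ h0]
    have hd := discrim_le_zero key
    unfold discrim at hd
    nlinarith [hd]
  have hnorm : ‖W g‖ ^ 2 = ⟪g, W (W g)⟫ := by
    rw [← hWsym g (W g)]
    exact (real_inner_self_eq_norm_sq _).symm
  have hkey : ‖W g‖ ^ 2 ≤ lammax * ⟪g, W g⟫ := by
    have h2 := hmax (W g)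
    have hWg_psd := hWpsd g
    rcases eq_or_lt_of_le (sq_nonneg ‖W g‖) with h | h
    · nlinarith
    · nlinarith
  -- apply smoothness
  have hs := hsmooth z (z - θ • W g)
  have hdiffpt : z - θ • W g - z = (-θ) • W g := by
    rw [sub_sub_cancel_left, neg_smul]
  rw [hdiffpt] at hs
  have hinner : ⟪g, (-θ) • W g⟫ = -θ * ⟪g, W g⟫ := real_inner_smul_right _ _ _
  have hnorm2 : ‖(-θ) • W g‖ ^ 2 = θ ^ 2 * ‖W g‖ ^ 2 := by
    rw [norm_smul]
    simp [mul_pow]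
  rw [hinner, hnorm2] at hs
  have hmin' := hmin g
  have hθL : L * θ ^ 2 * lammax = θ := by
    field_simp [hθ]
    rw [hθ]; field_simp [hL.ne', hlmax.ne']
  have : H (z - θ • W g) ≤ H z - θ / 2 * ⟪g, W g⟫ := by
    have hb : L / 2 * (θ ^ 2 * ‖W g‖ ^ 2) ≤ θ / 2 * ⟪g, W g⟫ := by
      nlinarith [hkey]
    linarith
  calc H (z - θ • W g) ≤ H z - θ / 2 * ⟪g, W g⟫ := this
    _ ≤ H z - θ * lammin / 2 * ⟪g, P g⟫ := by nlinarith [hmin']
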